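/- arXiv:2407.09362 — 4 statements merged into one kernel-verified Lean document; each statement's English description precedes it below -/
import Mathlib

section
/- For all real r > 0, cosh r · sinh(tanh(r)/2) < sinh r. (Hence the summit of a Saccheri quadrilateral with base tanh r and legs r has length less than 2r.) -/
open Real
theorem cosh_mul_sinh_tanh_half_lt (r : ℝ) (h : 0 < r) :
    cosh r * sinh (tanh r / 2) < sinh r := by
  have hc : 0 < cosh r := cosh_pos r
  have hs : 0 < sinh r := sinh_pos_iff.2 h
  have ht0 : 0 < tanh r := by
    rw [tanh_eq_sinh_div_cosh]; exact div_pos hs hc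
  have hsc : sinh r < cosh r := by
    rw [Real.sinh_eq, Real.cosh_eq]
    nlinarith [Real.exp_pos (-r)]
  have ht1 : tanh r < 1 := by
    rw [tanh_eq_sinh_div_cosh, div_lt_one hc]; exact hsc
  set a := tanh r / 2 with ha
  have ha0 : 0 < a := by positivity
  have ha2 : a < 1/2 := by rw [ha]; linarith
  have key : sinh a < tanh r := by
    rw [Real.sinh_eq]
    have h1 : 1 - a < Real.exp (-a) := by
      have := Real.add_one_lt_exp (x := -a) (by linarith)
      linarith
    have h2 : Real.exp a = 1 / Real.exp (-a) := by
      rw [Real.exp_neg]; field_simp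
    have hep : 0 < Real.exp (-a) := Real.exp_pos _
    rw [h2]
    rw [div_lt_iff₀ (by norm_num)]
    have h3 : 1 / Real.exp (-a) < 1 / (1 - a) :=
      one_div_lt_one_div_of_lt (by linarith) h1
    have h4 : 1 / (1 - a) - (1 - a) ≤ 4 * a := by
      rw [div_sub' (by linarith : (1:ℝ) - a ≠ 0), div_le_iff₀ (by linarith)]
      nlinarith
    have : tanh r = 2 * a := by rw [ha]; ring
    nlinarith
  calc cosh r * sinh a < cosh r * tanh r := by nlinarith
    _ = sinh r := by rw [tanh_eq_sinh_div_cosh, mul_div_cancel₀ _ (ne_of_gt hc)]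
end

section
/- For all real a with 0 ≤ a ≤ 1.8 and all real b ≥ 0, the quantity 2·arctan(tanh(a/2)·tanh(b/2)) is at least (a/5)·min(b, π). -/
open Real

private lemma tanh_mono' {x y : ℝ} (hxy : x ≤ y) : Real.tanh x ≤ Real.tanh y := by
  rw [Real.tanh_eq_sinh_div_cosh, Real.tanh_eq_sinh_div_cosh,
    div_le_div_iff₀ (Real.cosh_pos x) (Real.cosh_pos y)]
  have h1 : Real.sinh (x - y) ≤ 0 := by
    rw [Real.sinh_nonpos_iff]; linarith
  have h2 := Real.sinh_sub x y
  linarith [h2 ▸ h1]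

private lemma tanh_nonneg' {x : ℝ} (hx : 0 ≤ x) : 0 ≤ Real.tanh x := by
  simpa using tanh_mono' hx

private lemma tanh_lt_one' (x : ℝ) : Real.tanh x < 1 := by
  rw [Real.tanh_eq_sinh_div_cosh, div_lt_one (Real.cosh_pos x)]
  nlinarith [Real.cosh_sub_sinh x, Real.exp_pos (-x)]

private lemma myHasDerivAt_tanh (x : ℝ) : HasDerivAt Real.tanh (1 / Real.cosh x ^ 2) x := by
  have hfun : Real.tanh = fun y => Real.sinh y / Real.cosh y :=
    funext fun y => Real.tanh_eq_sinh_div_cosh y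
  rw [hfun]
  have h : HasDerivAt (fun y => Real.sinh y / Real.cosh y)
      ((Real.cosh x * Real.cosh x - Real.sinh x * Real.sinh x) / Real.cosh x ^ 2) x :=
    (Real.hasDerivAt_sinh x).div (Real.hasDerivAt_cosh x) (Real.cosh_pos x).ne'
  have e : Real.cosh x * Real.cosh x - Real.sinh x * Real.sinh x = 1 := by
    nlinarith [Real.cosh_sq_sub_sinh_sq x]
  rw [e] at h
  exact h

private lemma hasDerivAt_F (c x : ℝ) :
    HasDerivAt (fun y => arctan (c * Real.tanh (y / 2)))
      (1 / (1 + (c * Real.tanh (x / 2)) ^ 2) * (c * (1 / Real.cosh (x / 2) ^ 2 * (1 / 2)))) x := by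
  have h1 : HasDerivAt (fun y : ℝ => y / 2) (1 / 2) x := by
    simpa using (hasDerivAt_id x).div_const 2
  have h2 : HasDerivAt (fun y : ℝ => Real.tanh (y / 2))
      (1 / Real.cosh (x / 2) ^ 2 * (1 / 2)) x := by
    have := (myHasDerivAt_tanh ((fun y : ℝ => y / 2) x)).comp x h1; exact this
  have h3 := h2.const_mul c
  exact h3.arctan

private lemma concaveF {c : ℝ} (hc : 0 ≤ c) :
    ConcaveOn ℝ (Set.Ici 0) (fun x => arctan (c * Real.tanh (x / 2))) := by
  apply AntitoneOn.concaveOn_of_deriv (convex_Ici 0)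
  · exact fun x _ => ((hasDerivAt_F c x).continuousAt).continuousWithinAt
  · exact fun x _ => (hasDerivAt_F c x).differentiableAt.differentiableWithinAt
  · intro x hx y hy hxy
    rw [interior_Ici] at hx hy
    rw [(hasDerivAt_F c x).deriv, (hasDerivAt_F c y).deriv]
    have hx0 : (0:ℝ) ≤ x := le_of_lt hx
    have hy0 : (0:ℝ) ≤ y := le_of_lt hy
    have ht : Real.tanh (x / 2) ≤ Real.tanh (y / 2) := tanh_mono' (by linarith)
    have htx : 0 ≤ Real.tanh (x / 2) := tanh_nonneg' (by linarith)
    have hch : Real.cosh (x / 2) ≤ Real.cosh (y / 2) := by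
      rw [Real.cosh_le_cosh, abs_of_nonneg (by linarith), abs_of_nonneg (by linarith)]
      linarith
    have hcx : 0 < Real.cosh (x / 2) := Real.cosh_pos _
    have hAx : (0:ℝ) < 1 + (c * Real.tanh (x / 2)) ^ 2 := by positivity
    have hAy : (0:ℝ) < 1 + (c * Real.tanh (y / 2)) ^ 2 := by positivity
    have hBx : (0:ℝ) < Real.cosh (x / 2) ^ 2 := by positivity
    have hBy : (0:ℝ) < Real.cosh (y / 2) ^ 2 := by positivity
    have e : ∀ A B : ℝ, 0 < A → 0 < B →
        (1 / A) * (c * (1 / B * (1 / 2))) = (c / 2) * (A * B)⁻¹ := by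
      intro A B _ _; rw [mul_inv]; ring
    rw [e _ _ hAy hBy, e _ _ hAx hBx]
    apply mul_le_mul_of_nonneg_left _ (by positivity)
    apply inv_anti₀ (by positivity)
    have hprod : c * Real.tanh (x / 2) ≤ c * Real.tanh (y / 2) :=
      mul_le_mul_of_nonneg_left ht hc
    have hTx0 : 0 ≤ c * Real.tanh (x / 2) := mul_nonneg hc htx
    have hT2 : (c * Real.tanh (x / 2)) ^ 2 ≤ (c * Real.tanh (y / 2)) ^ 2 :=
      pow_le_pow_left₀ hTx0 hprod 2
    have hB2 : Real.cosh (x / 2) ^ 2 ≤ Real.cosh (y / 2) ^ 2 :=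
      pow_le_pow_left₀ hcx.le hch 2
    exact mul_le_mul (by linarith) hB2 hBx.le (by positivity)

private lemma chordF {f : ℝ → ℝ} (hf : ConcaveOn ℝ (Set.Ici 0) f) (h0 : f 0 = 0) {x M : ℝ}
    (hx0 : 0 ≤ x) (hxM : x ≤ M) (hM : 0 < M) : x / M * f M ≤ f x := by
  have hx' : (0:ℝ) ∈ Set.Ici (0:ℝ) := Set.self_mem_Ici
  have hM' : M ∈ Set.Ici (0:ℝ) := le_of_lt hM
  have ha : (0:ℝ) ≤ 1 - x / M := by
    have : x / M ≤ 1 := by rw [div_le_one hM]; exact hxM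
    linarith
  have hb : (0:ℝ) ≤ x / M := by positivity
  have h := hf.2 hx' hM' ha hb (by ring)
  have harg : (1 - x / M) • (0:ℝ) + (x / M) • M = x := by
    field_simp
    simp [smul_eq_mul, hM.ne']
  rw [harg] at h
  simpa [h0, smul_eq_mul] using h

private lemma arctan_le_self' {t : ℝ} (ht : 0 ≤ t) : arctan t ≤ t := by
  rcases eq_or_lt_of_le ht with h | h
  · simp [← h]
  · have h1 : 0 < arctan t := by
      have := Real.arctan_strictMono h
      simpa using this
    have := Real.lt_tan h1 (Real.arctan_lt_pi_div_two t)
    rw [Real.tan_arctan] at this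
    exact this.le

private lemma arctan_lb {x : ℝ} (hx0 : 0 ≤ x) (hx1 : x < 1) (hxlb : (0.6479 : ℝ) ≤ x) :
    9 * π / 50 ≤ arctan x := by
  have hx1p : (0:ℝ) < 1 + x := by linarith
  set y := (1 - x) / (1 + x) with hydef
  have hy0 : 0 ≤ y := div_nonneg (by linarith) (by linarith)
  have hy1 : y < 1 := by rw [hydef, div_lt_one hx1p]; linarith
  have hxy : x * y < 1 := by nlinarith
  have hsum : x + y = 1 - x * y := by
    rw [hydef]
    field_simp
    ring
  have hid : arctan x + arctan y = π / 4 := by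
    rw [Real.arctan_add hxy, hsum, div_self (by linarith : (1:ℝ) - x * y ≠ 0), Real.arctan_one]
  have hyub : y ≤ 0.2137 := by
    rw [hydef, div_le_iff₀ hx1p]
    nlinarith
  have harctany : arctan y ≤ 0.2137 := le_trans (arctan_le_self' hy0) hyub
  have hpi := Real.pi_gt_d6
  nlinarith

private lemma numeric_step : 9 * π / 50 ≤ arctan (Real.tanh (π / 2) * Real.tanh (9 / 10)) := by
  -- lower bound for tanh (9/10)
  have hE : (2.4594 : ℝ) ≤ Real.exp 0.9 := by
    have h := Real.sum_le_exp_of_nonneg (by norm_num : (0:ℝ) ≤ 0.9) 7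
    have : (2.4594 : ℝ) ≤ ∑ i ∈ Finset.range 7, (0.9:ℝ) ^ i / i.factorial := by
      norm_num [Finset.sum_range_succ, Nat.factorial]
    linarith
  have hT9 : (0.716 : ℝ) ≤ Real.tanh (9 / 10) := by
    rw [Real.tanh_eq_sinh_div_cosh, Real.sinh_eq, Real.cosh_eq]
    have hEpos : (0:ℝ) < Real.exp (9/10) := Real.exp_pos _
    have hEneg : Real.exp (-(9/10) : ℝ) = (Real.exp (9/10))⁻¹ := by
      rw [Real.exp_neg]
    have h910 : ((0.9 : ℝ) : ℝ) = 9 / 10 := by norm_num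
    rw [h910] at hE
    rw [hEneg, le_div_iff₀ (by positivity)]
    have hinv : (Real.exp (9/10))⁻¹ * Real.exp (9/10) = 1 := inv_mul_cancel₀ hEpos.ne'
    nlinarith [sq_nonneg (Real.exp (9/10) - 2.4594), inv_pos.2 hEpos]
  have hTpi : (0.905 : ℝ) ≤ Real.tanh (π / 2) := by
    have h15 : (0.905 : ℝ) ≤ Real.tanh (3 / 2) := by
      rw [Real.tanh_eq_sinh_div_cosh, Real.sinh_eq, Real.cosh_eq]
      have hEpos : (0:ℝ) < Real.exp (3/2) := Real.exp_pos _
      have hsq : Real.exp (3/2) * Real.exp (3/2) = Real.exp 3 := by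
        rw [← Real.exp_add]; norm_num
      have he3 : (20.08 : ℝ) ≤ Real.exp 3 := by
        have h1 : (2.7182818283 : ℝ) < Real.exp 1 := Real.exp_one_gt_d9
        have h3 : Real.exp 3 = Real.exp 1 * Real.exp 1 * Real.exp 1 := by
          rw [← Real.exp_add, ← Real.exp_add]; norm_num
        nlinarith [Real.exp_pos 1]
      have hEneg : Real.exp (-(3/2) : ℝ) = (Real.exp (3/2))⁻¹ := Real.exp_neg _
      rw [hEneg, le_div_iff₀ (by positivity)]
      have hinv : (Real.exp (3/2))⁻¹ * Real.exp (3/2) = 1 := inv_mul_cancel₀ hEpos.ne'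
      nlinarith [inv_pos.2 hEpos]
    have : Real.tanh (3 / 2) ≤ Real.tanh (π / 2) := by
      apply tanh_mono'
      have := Real.pi_gt_d6
      linarith
    linarith
  have hxlb : (0.6479 : ℝ) ≤ Real.tanh (π / 2) * Real.tanh (9 / 10) := by
    calc (0.6479 : ℝ) ≤ 0.905 * 0.716 := by norm_num
    _ ≤ _ := by
        apply mul_le_mul hTpi hT9 (by norm_num)
        linarith [tanh_nonneg' (show (0:ℝ) ≤ π/2 by positivity)]
  have hx1 : Real.tanh (π / 2) * Real.tanh (9 / 10) < 1 := by
    have h1 := tanh_lt_one' (π / 2)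
    have h2 := tanh_lt_one' (9 / 10 : ℝ)
    have h3 := tanh_nonneg' (show (0:ℝ) ≤ 9/10 by norm_num)
    nlinarith
  exact arctan_lb (by linarith) hx1 hxlb

theorem triangle_area_lower_bound (a b : ℝ) (ha0 : 0 ≤ a) (ha : a ≤ 1.8) (hb : 0 ≤ b) :
    a / 5 * min b π ≤ 2 * arctan (tanh (a / 2) * tanh (b / 2)) := by
  have hpi : (0:ℝ) < π := Real.pi_pos
  set m := min b π with hm
  have hm0 : 0 ≤ m := le_min hb hpi.le
  have hmpi : m ≤ π := min_le_right _ _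
  have hmb : m ≤ b := min_le_left _ _
  have hta0 : 0 ≤ Real.tanh (a / 2) := tanh_nonneg' (by linarith)
  -- step 1: monotonicity in b
  have step1 : arctan (Real.tanh (a / 2) * Real.tanh (m / 2)) ≤
      arctan (Real.tanh (a / 2) * Real.tanh (b / 2)) := by
    apply Real.arctan_strictMono.monotone
    exact mul_le_mul_of_nonneg_left (tanh_mono' (by linarith)) hta0
  -- step 2: chord in m over [0, π]
  have hconc1 := concaveF hta0
  have step2 : m / π * arctan (Real.tanh (a / 2) * Real.tanh (π / 2)) ≤
      arctan (Real.tanh (a / 2) * Real.tanh (m / 2)) := by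
    have h0 : arctan (Real.tanh (a / 2) * Real.tanh ((0:ℝ) / 2)) = 0 := by
      norm_num [Real.tanh_zero, Real.arctan_zero]
    exact chordF hconc1 h0 hm0 hmpi hpi
  -- step 3: chord in a over [0, 1.8]
  have htpi0 : 0 ≤ Real.tanh (π / 2) := tanh_nonneg' (by positivity)
  have hconc2 := concaveF htpi0
  have step3 : a / 1.8 * arctan (Real.tanh (π / 2) * Real.tanh (1.8 / 2)) ≤
      arctan (Real.tanh (π / 2) * Real.tanh (a / 2)) := by
    have h0 : arctan (Real.tanh (π / 2) * Real.tanh ((0:ℝ) / 2)) = 0 := by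
      norm_num [Real.tanh_zero, Real.arctan_zero]
    exact chordF hconc2 h0 ha0 ha (by norm_num)
  have hcomm : arctan (Real.tanh (π / 2) * Real.tanh (a / 2)) =
      arctan (Real.tanh (a / 2) * Real.tanh (π / 2)) := by rw [mul_comm]
  have h18 : (1.8 : ℝ) / 2 = 9 / 10 := by norm_num
  rw [hcomm] at step3
  rw [h18] at step3
  have hnum := numeric_step
  -- combine
  have key : a / 1.8 * (9 * π / 50) ≤ arctan (Real.tanh (a / 2) * Real.tanh (π / 2)) := by
    calc a / 1.8 * (9 * π / 50) ≤ a / 1.8 * arctan (Real.tanh (π / 2) * Real.tanh (9 / 10)) := by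
          apply mul_le_mul_of_nonneg_left hnum (by positivity)
    _ ≤ _ := step3
  have harc0 : 0 ≤ arctan (Real.tanh (a / 2) * Real.tanh (π / 2)) := by
    rw [← Real.arctan_zero]
    apply Real.arctan_strictMono.monotone
    exact mul_nonneg hta0 htpi0
  calc a / 5 * m = 2 * (m / π * (a / 1.8 * (9 * π / 50))) := by
        field_simp; ring
  _ ≤ 2 * (m / π * arctan (Real.tanh (a / 2) * Real.tanh (π / 2))) := by
        apply mul_le_mul_of_nonneg_left _ (by norm_num)
        exact mul_le_mul_of_nonneg_left key (by positivity)
  _ ≤ 2 * arctan (Real.tanh (a / 2) * Real.tanh (m / 2)) := by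
        apply mul_le_mul_of_nonneg_left step2 (by norm_num)
  _ ≤ 2 * arctan (Real.tanh (a / 2) * Real.tanh (b / 2)) := by
        apply mul_le_mul_of_nonneg_left step1 (by norm_num)
end

section
/- For all real x ≥ 0, √(2x) − x^{3/2}/(6√2) ≤ arcosh(1 + x) ≤ √(2x). -/
open Real

/-- The real inverse hyperbolic cosine, `arcosh y = log (y + √(y² − 1))`. -/
noncomputable def arcosh (y : ℝ) : ℝ := Real.log (y + Real.sqrt (y ^ 2 - 1))

lemma sinh_sub_self_le (u : ℝ) (hu : 0 ≤ u) :
    Real.sinh u - u ≤ Real.sinh u ^ 3 / 6 := by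
  have mono : MonotoneOn (fun v => Real.sinh v ^ 3 / 6 - Real.sinh v + v) (Set.Ici 0) := by
    apply monotoneOn_of_deriv_nonneg (convex_Ici 0)
    · exact Continuous.continuousOn (by continuity)
    · intro v _
      exact ((((Real.differentiable_sinh v).pow 3).div_const 6).sub
        (Real.differentiable_sinh v)).add (differentiable_id v) |>.differentiableWithinAt
    · intro v _
      have hD : HasDerivAt (fun v => Real.sinh v ^ 3 / 6 - Real.sinh v + v)
          ((3 * Real.sinh v ^ 2 * Real.cosh v) / 6 - Real.cosh v + 1) v := by
        have h1 := Real.hasDerivAt_sinh v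
        exact (((h1.pow 3).div_const 6).sub h1).add (hasDerivAt_id v)
      rw [hD.deriv]
      have h1 := Real.one_le_cosh v
      have h2 := Real.cosh_sq v
      nlinarith [sq_nonneg (Real.cosh v - 1), sq_nonneg (Real.cosh v + 1)]
  have h := mono (Set.self_mem_Ici) (Set.mem_Ici.mpr hu) hu
  simp only [Real.sinh_zero] at h
  linarith

theorem arcosh_series_bounds (x : ℝ) (hx : 0 ≤ x) :
    Real.sqrt (2 * x) - x ^ ((3 : ℝ) / 2) / (6 * Real.sqrt 2) ≤ _root_.arcosh (1 + x) ∧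
    _root_.arcosh (1 + x) ≤ Real.sqrt (2 * x) := by
  set A := Real.sqrt ((1 + x) ^ 2 - 1) with hA
  have hA0 : 0 ≤ A := Real.sqrt_nonneg _
  have hA2 : A ^ 2 = (1 + x) ^ 2 - 1 := Real.sq_sqrt (by nlinarith)
  have hpos : 0 < 1 + x + A := by nlinarith
  set t := _root_.arcosh (1 + x) with ht
  have hexp : Real.exp t = 1 + x + A := by
    rw [ht, _root_.arcosh, ← hA, Real.exp_log hpos]
  have hexpneg : Real.exp (-t) = 1 + x - A := by
    rw [Real.exp_neg, hexp]
    exact inv_eq_of_mul_eq_one_right (by nlinarith)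
  have hcosh : Real.cosh t = 1 + x := by
    rw [Real.cosh_eq, hexp, hexpneg]; ring
  have ht0 : 0 ≤ t := by
    have hs : Real.sinh t = A := by rw [Real.sinh_eq, hexp, hexpneg]; ring
    exact Real.sinh_nonneg_iff.mp (hs ▸ hA0)
  set u := t / 2 with hu
  have hu0 : 0 ≤ u := by positivity
  have hS0 : 0 ≤ Real.sinh u := Real.sinh_nonneg_iff.mpr hu0
  have hsu : 2 * Real.sinh u ^ 2 = x := by
    have h2u : Real.cosh (2 * u) = 1 + x := by rw [show 2 * u = t by rw [hu]; ring]; exact hcosh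
    have h1 := Real.cosh_two_mul u
    have h2 := Real.cosh_sq u
    nlinarith
  have hs : Real.sqrt (2 * x) = 2 * Real.sinh u := by
    rw [show 2 * x = (2 * Real.sinh u) ^ 2 by nlinarith]
    exact Real.sqrt_sq (by positivity)
  have hule : u ≤ Real.sinh u := Real.self_le_sinh_iff.mpr hu0
  constructor
  · -- lower bound
    have hx32 : x ^ ((3 : ℝ) / 2) = Real.sqrt x ^ 3 := by
      rw [Real.sqrt_eq_rpow, ← Real.rpow_natCast (x ^ ((1 : ℝ) / 2)) 3, ← Real.rpow_mul hx]
      norm_num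
    have hsqx : Real.sqrt x = Real.sqrt 2 * Real.sinh u := by
      rw [show x = (Real.sqrt 2 * Real.sinh u) ^ 2 by
        rw [mul_pow, Real.sq_sqrt (by norm_num : (0:ℝ) ≤ 2)]; linarith]
      exact Real.sqrt_sq (by positivity)
    have h2 : Real.sqrt 2 ^ 2 = 2 := Real.sq_sqrt (by norm_num)
    have h2pos : 0 < Real.sqrt 2 := Real.sqrt_pos.mpr (by norm_num)
    have hcube : (Real.sqrt 2 * Real.sinh u) ^ 3 / (6 * Real.sqrt 2)
        = Real.sinh u ^ 3 / 3 := by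
      rw [mul_pow, show Real.sqrt 2 ^ 3 = 2 * Real.sqrt 2 by rw [pow_succ, h2]]
      field_simp
      ring
    rw [hs, hx32, hsqx, hcube]
    have key := sinh_sub_self_le u hu0
    have : t = 2 * u := by rw [hu]; ring
    linarith
  · -- upper bound
    rw [hs]
    have : t = 2 * u := by rw [hu]; ring
    linarith
end

section
/- Define B : ℕ → ℝ recursively governed by the recursion of balanced separation: for reals n > t ≥ 1 and constant c > 0, suppose B(n) ≤ c√n + max over α ∈ [1/37, 1/2] of (B(αn) + B((1−α)n)) whenever n > t, and B(n) = 0 for t/37 < n ≤ t. Then B(n) < 43c·n/√t − 7c·√n for all n > t/37. -/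
set_option maxHeartbeats 800000

open Real
/-- The separator recursion: if `B n = 0` for `t/37 < n ≤ t` and
`B n ≤ c√n + max_{α ∈ [1/37,1/2]} (B(αn) + B((1-α)n))` for `n > t`, then
`B n < 43c·n/√t − 7c·√n` for all `n > t/37`. -/
theorem separator_recursion (c t : ℝ) (hc : 0 < c) (ht : 1 ≤ t) (B : ℝ → ℝ)
    (hbase : ∀ n : ℝ, t / 37 < n → n ≤ t → B n = 0)
    (hrec : ∀ n : ℝ, t < n →
      B n ≤ c * Real.sqrt n +
        sSup ((fun α : ℝ => B (α * n) + B ((1 - α) * n)) '' Set.Icc (1 / 37) (1 / 2))) :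
    ∀ n : ℝ, t / 37 < n → B n < 43 * c * n / Real.sqrt t - 7 * c * Real.sqrt n := by
  have ht0 : (0:ℝ) < t := lt_of_lt_of_le one_pos ht
  have hst : 0 < Real.sqrt t := Real.sqrt_pos.mpr ht0
  have h370 : (0:ℝ) < Real.sqrt 37 := Real.sqrt_pos.mpr (by norm_num)
  have h37le : Real.sqrt 37 ≤ 43 / 7 := by
    rw [show (43:ℝ)/7 = Real.sqrt ((43/7)^2) by
      rw [Real.sqrt_sq (by norm_num : (0:ℝ) ≤ 43/7)]]
    apply Real.sqrt_le_sqrt; norm_num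
  have h37lt : Real.sqrt 37 < 49 / 8 := by
    rw [show (49:ℝ)/8 = Real.sqrt ((49/8)^2) by
      rw [Real.sqrt_sq (by norm_num : (0:ℝ) ≤ 49/8)]]
    apply Real.sqrt_lt_sqrt (by norm_num); norm_num
  have h6 : (6:ℝ) ≤ Real.sqrt 37 := by
    rw [show (6:ℝ) = Real.sqrt 36 by
      rw [show (36:ℝ) = 6^2 by norm_num, Real.sqrt_sq (by norm_num : (0:ℝ) ≤ 6)]]
    exact Real.sqrt_le_sqrt (by norm_num)
  have hq8 : (8:ℝ) < 7 * (7 / Real.sqrt 37) := by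
    rw [show 7 * (7 / Real.sqrt 37) = 49 / Real.sqrt 37 by ring, lt_div_iff₀ h370]
    nlinarith
  have hq67 : 7 / Real.sqrt 37 ≤ 7 / 6 := by
    rw [div_le_div_iff₀ h370 (by norm_num : (0:ℝ) < 6)]
    linarith
  have hconc : ∀ α : ℝ, 1/37 ≤ α → α ≤ 1/2 →
      7 / Real.sqrt 37 ≤ Real.sqrt α + Real.sqrt (1 - α) := by
    intro α h1 h2
    have hα0 : (0:ℝ) ≤ α := by linarith
    have hα1 : (0:ℝ) ≤ 1 - α := by linarith
    have ha := Real.sq_sqrt hα0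
    have hb := Real.sq_sqrt hα1
    have hab : (6:ℝ)/37 ≤ Real.sqrt α * Real.sqrt (1-α) := by
      rw [← Real.sqrt_mul hα0]
      rw [show (6:ℝ)/37 = Real.sqrt ((6/37)^2) by
        rw [Real.sqrt_sq (by norm_num : (0:ℝ) ≤ 6/37)]]
      apply Real.sqrt_le_sqrt; nlinarith
    have hsum : Real.sqrt (49/37) ≤ Real.sqrt α + Real.sqrt (1-α) := by
      rw [show Real.sqrt α + Real.sqrt (1-α)
          = Real.sqrt ((Real.sqrt α + Real.sqrt (1-α))^2) by
        rw [Real.sqrt_sq (by positivity)]]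
      apply Real.sqrt_le_sqrt; nlinarith
    have heq : 7 / Real.sqrt 37 = Real.sqrt (49/37) := by
      rw [Real.sqrt_div (by norm_num : (0:ℝ) ≤ 49) 37,
        show (49:ℝ) = 7^2 by norm_num, Real.sqrt_sq (by norm_num : (0:ℝ) ≤ 7)]
    linarith [heq ▸ hsum]
  -- base case bound
  have basecase : ∀ n : ℝ, t/37 < n → n ≤ t →
      B n < 43 * c * n / Real.sqrt t - 7 * c * Real.sqrt n := by
    intro n h1 h2
    have hn0 : 0 < n := lt_trans (by positivity) h1
    have hr : 0 < Real.sqrt n := Real.sqrt_pos.mpr hn0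
    rw [hbase n h1 h2, sub_pos, lt_div_iff₀ hst]
    have hsn := Real.sq_sqrt hn0.le
    have hstq := Real.sq_sqrt ht0.le
    have h37n : Real.sqrt t < Real.sqrt 37 * Real.sqrt n := by
      rw [← Real.sqrt_mul (by norm_num : (0:ℝ) ≤ 37)]
      exact Real.sqrt_lt_sqrt ht0.le (by linarith)
    nlinarith [mul_pos hc hr, mul_lt_mul_of_pos_left h37n (mul_pos hc hr),
      mul_le_mul_of_nonneg_right h37le (le_of_lt (mul_pos (mul_pos hc hr) hr))]
  have key : ∀ k : ℕ, ∀ n : ℝ, t/37 < n → n ≤ t * (37/36)^k →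
      B n < 43 * c * n / Real.sqrt t - 7 * c * Real.sqrt n := by
    intro k
    induction k with
    | zero =>
      intro n h1 h2
      simp only [pow_zero, mul_one] at h2
      exact basecase n h1 h2
    | succ k ih =>
      intro n h1 h2
      by_cases hn : n ≤ t
      · exact basecase n h1 hn
      · push_neg at hn
        have hn0 : 0 < n := lt_trans ht0 hn
        have hr : 0 < Real.sqrt n := Real.sqrt_pos.mpr hn0
        have hsn := Real.sq_sqrt hn0.le
        have hstn : Real.sqrt t ≤ Real.sqrt n := Real.sqrt_le_sqrt hn.le
        rw [pow_succ] at h2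
        have hpk : (0:ℝ) < (37/36)^k := pow_pos (by norm_num) k
        have hM : sSup ((fun α : ℝ => B (α * n) + B ((1 - α) * n)) '' Set.Icc (1 / 37) (1 / 2))
            ≤ 43 * c * n / Real.sqrt t - 7 * c * (7 / Real.sqrt 37) * Real.sqrt n := by
          apply Real.sSup_le
          · rintro x ⟨α, hαmem, rfl⟩
            obtain ⟨hα1, hα2⟩ := hαmem
            have hd1 : (0:ℝ) ≤ (α - 1/37) * n :=
              mul_nonneg (by linarith) hn0.le
            have hd2 : (0:ℝ) ≤ (1/2 - α) * n :=
              mul_nonneg (by linarith) hn0.le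
            have h1a : t/37 < α * n := by nlinarith [hd1]
            have h2a : α * n ≤ t * (37/36)^k := by nlinarith [hd2, h2, hpk, mul_pos ht0 hpk]
            have h1b : t/37 < (1-α) * n := by nlinarith [hd2]
            have h2b : (1-α) * n ≤ t * (37/36)^k := by nlinarith [hd1, h2, hpk, mul_pos ht0 hpk]
            have ihA := ih (α*n) h1a h2a
            have ihB := ih ((1-α)*n) h1b h2b
            have hsa : Real.sqrt (α*n) = Real.sqrt α * Real.sqrt n :=
              Real.sqrt_mul (by linarith) n
            have hsb : Real.sqrt ((1-α)*n) = Real.sqrt (1-α) * Real.sqrt n :=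
              Real.sqrt_mul (by linarith) n
            have hcc := hconc α hα1 hα2
            have heq : 43*c*(α*n)/Real.sqrt t + 43*c*((1-α)*n)/Real.sqrt t
                = 43*c*n/Real.sqrt t := by ring
            have hlow : 7*c*(7/Real.sqrt 37) * Real.sqrt n
                ≤ 7*c*(Real.sqrt (α*n) + Real.sqrt ((1-α)*n)) := by
              rw [hsa, hsb]
              nlinarith [mul_pos hc hr]
            simp only
            linarith
          · have f1 : 7/Real.sqrt 37 * (7*c*Real.sqrt n) ≤ 7/6 * (7*c*Real.sqrt n) :=
              mul_le_mul_of_nonneg_right hq67 (by positivity)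
            have f2 : 43*c*Real.sqrt n ≤ 43*c*n/Real.sqrt t := by
              rw [le_div_iff₀ hst]
              nlinarith [mul_le_mul_of_nonneg_left hstn
                (by positivity : (0:ℝ) ≤ 43*c*Real.sqrt n), hsn]
            have f3 : (0:ℝ) < c * Real.sqrt n := mul_pos hc hr
            linarith [f1, f2, f3]
        have hB := hrec n hn
        linarith [mul_pos (by linarith : (0:ℝ) < 7 * (7 / Real.sqrt 37) - 8) (mul_pos hc hr)]
  intro n h1
  obtain ⟨k, hk⟩ := pow_unbounded_of_one_lt (n/t) (by norm_num : (1:ℝ) < 37/36)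
  exact key k n h1 (by rw [div_lt_iff₀ ht0] at hk; linarith)
end
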